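/- Let d be a finite-dimensional Lie algebra and H = U(d). Write α = r + s ⊗ 1 − 1 ⊗ s with r ∈ d ∧ d and s ∈ d. Then the rank-one Jacobi equation (α ⊗ 1)(Δ ⊗ id)(α) = (1 ⊗ α)(id ⊗ Δ)(α) − (σ ⊗ id)((1 ⊗ α)(id ⊗ Δ)(α)) is equivalent to the system: (1) [r, Δ(s)] = 0 in U(d) ⊗ U(d), and (2) ([r₁₂, r₁₃] + r₁₂·s₃) + cyclic permutations (in the three tensor factors) = 0 in U(d)^{⊗3}. -/

import Mathlib

/-!
STATEMENT 9: Let `d` be a finite-dimensional Lie algebra, `H = U(d)`, and write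
`α = r + s ⊗ 1 − 1 ⊗ s` with `r ∈ d ∧ d`, `s ∈ d`.  Then the rank-one Jacobi equation
`(α ⊗ 1)(Δ ⊗ id)(α) = (1 ⊗ α)(id ⊗ Δ)(α) − (σ ⊗ id)((1 ⊗ α)(id ⊗ Δ)(α))`
is equivalent to the system:
(1) `[r, Δ(s)] = 0` in `U(d) ⊗ U(d)`, and
(2) `([r₁₂, r₁₃] + r₁₂·s₃) + cyclic = 0` in `U(d)^{⊗3}`
(brackets are commutators, "cyclic" sums the two nontrivial cyclic permutations of the
tensor factors, `σ` is the flip of the first two factors).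

Mathlib does not endow `UniversalEnvelopingAlgebra` with its Hopf structure, so the
comultiplication `Δ` is constructed below via the universal property:
`Δ(x) = x ⊗ 1 + 1 ⊗ x` for `x ∈ d`.
-/

open TensorProduct

attribute [local instance 100] LieRing.ofAssociativeRing

noncomputable section

variable (k : Type*) [Field k] [CharZero k]
variable (d : Type*) [LieRing d] [LieAlgebra k d]

local notation "Uk" => UniversalEnvelopingAlgebra k d

/-- The canonical embedding `d → U(d)`. -/
def iotaU : d →ₗ[k] Uk := (UniversalEnvelopingAlgebra.ι k).toLinearMap

/-- The Lie algebra map `d → U(d) ⊗ U(d)`, `x ↦ x ⊗ 1 + 1 ⊗ x`. -/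
def primHom : d →ₗ⁅k⁆ Uk ⊗[k] Uk where
  toLinearMap :=
    ((TensorProduct.mk k Uk Uk).flip 1 + TensorProduct.mk k Uk Uk 1) ∘ₗ iotaU k d
  map_lie' := by
    intro x y
    simp only [LinearMap.toFun_eq_coe, LinearMap.comp_apply, LinearMap.add_apply,
      TensorProduct.mk_apply, LinearMap.flip_apply, iotaU, LieHom.coe_toLinearMap,
      LieHom.map_lie, Ring.lie_def]
    simp only [mul_add, add_mul, Algebra.TensorProduct.tmul_mul_tmul,
      TensorProduct.sub_tmul, TensorProduct.tmul_sub, mul_one, one_mul]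
    abel

/-- The comultiplication `Δ : U(d) → U(d) ⊗ U(d)` of the Hopf algebra `U(d)`. -/
def comulU : Uk →ₐ[k] Uk ⊗[k] Uk :=
  UniversalEnvelopingAlgebra.lift k (primHom k d)

/-- The image of `r ∈ d ⊗ d` in `U(d) ⊗ U(d)`. -/
def rU : d ⊗[k] d →ₗ[k] Uk ⊗[k] Uk := TensorProduct.map (iotaU k d) (iotaU k d)

/-- `α = r + s ⊗ 1 − 1 ⊗ s ∈ U(d) ⊗ U(d)`. -/
def alphaOf (r : d ⊗[k] d) (s : d) : Uk ⊗[k] Uk :=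
  rU k d r + (iotaU k d s) ⊗ₜ[k] (1 : Uk) - (1 : Uk) ⊗ₜ[k] (iotaU k d s)

/-- `id ⊗ Δ : U ⊗ U → U^{⊗3}`. -/
def idComulU : Uk ⊗[k] Uk →ₗ[k] Uk ⊗[k] (Uk ⊗[k] Uk) :=
  LinearMap.lTensor Uk (comulU k d).toLinearMap

/-- `Δ ⊗ id : U ⊗ U → U^{⊗3}` (reassociated). -/
def comulIdU : Uk ⊗[k] Uk →ₗ[k] Uk ⊗[k] (Uk ⊗[k] Uk) :=
  (TensorProduct.assoc k Uk Uk Uk).toLinearMap ∘ₗ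
    LinearMap.rTensor Uk (comulU k d).toLinearMap

/-- `u ↦ u ⊗ 1 : U ⊗ U → U^{⊗3}` (first two factors). -/
def emb12 : Uk ⊗[k] Uk →ₗ[k] Uk ⊗[k] (Uk ⊗[k] Uk) :=
  (TensorProduct.assoc k Uk Uk Uk).toLinearMap ∘ₗ
    ((TensorProduct.mk k (Uk ⊗[k] Uk) Uk).flip 1)

/-- `u ↦ u₁₃`, placing `u ∈ U ⊗ U` in the first and third factors of `U^{⊗3}`. -/
def emb13 : Uk ⊗[k] Uk →ₗ[k] Uk ⊗[k] (Uk ⊗[k] Uk) :=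
  TensorProduct.map LinearMap.id (TensorProduct.mk k Uk Uk 1)

/-- `σ ⊗ id` on `U^{⊗3}`: the transposition of the first two factors. -/
def swap12 : Uk ⊗[k] (Uk ⊗[k] Uk) →ₗ[k] Uk ⊗[k] (Uk ⊗[k] Uk) :=
  (TensorProduct.assoc k Uk Uk Uk).toLinearMap
    ∘ₗ LinearMap.rTensor Uk (TensorProduct.comm k Uk Uk).toLinearMap
    ∘ₗ (TensorProduct.assoc k Uk Uk Uk).symm.toLinearMap

/-- The cyclic permutation `x ⊗ y ⊗ z ↦ y ⊗ z ⊗ x` of `U^{⊗3}`. -/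
def cyc : Uk ⊗[k] (Uk ⊗[k] Uk) →ₗ[k] Uk ⊗[k] (Uk ⊗[k] Uk) :=
  (TensorProduct.assoc k Uk Uk Uk).toLinearMap ∘ₗ
    (TensorProduct.comm k Uk (Uk ⊗[k] Uk)).toLinearMap

/-- `E = [r₁₂, r₁₃] + r₁₂ · s₃`. -/
def cybTerm (r : d ⊗[k] d) (s : d) : Uk ⊗[k] (Uk ⊗[k] Uk) :=
  (emb12 k d (rU k d r) * emb13 k d (rU k d r)
      - emb13 k d (rU k d r) * emb12 k d (rU k d r))
    + emb12 k d (rU k d r) * ((1 : Uk) ⊗ₜ[k] ((1 : Uk) ⊗ₜ[k] iotaU k d s))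


/-! ### Auxiliary machinery -/

set_option linter.unusedSectionVars false
set_option maxHeartbeats 1600000
set_option synthInstance.maxHeartbeats 400000

section AuxLemmas

/-- An extensionality principle for linear maps out of the triple tensor product. -/
theorem ext3 {M : Type*} [AddCommMonoid M] [Module k M]
    {f g : Uk ⊗[k] (Uk ⊗[k] Uk) →ₗ[k] M}
    (h : ∀ x y z : Uk, f (x ⊗ₜ[k] (y ⊗ₜ[k] z)) = g (x ⊗ₜ[k] (y ⊗ₜ[k] z))) : f = g := by
  apply TensorProduct.ext'
  intro x u
  induction u using TensorProduct.induction_on with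
  | zero => simp
  | tmul y z => exact h x y z
  | add u v hu hv => rw [TensorProduct.tmul_add, map_add, map_add, hu, hv]

lemma comul_iota (x : d) :
    comulU k d (iotaU k d x) = iotaU k d x ⊗ₜ[k] (1 : Uk) + (1 : Uk) ⊗ₜ[k] iotaU k d x := by
  have h : comulU k d (iotaU k d x) = primHom k d x :=
    UniversalEnvelopingAlgebra.lift_ι_apply k (primHom k d) x
  rw [h]
  show (((TensorProduct.mk k Uk Uk).flip 1 + TensorProduct.mk k Uk Uk 1) ∘ₗ iotaU k d) x = _
  simp

/-- The counit of `U(d)`. -/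
def epsA : Uk →ₐ[k] k := UniversalEnvelopingAlgebra.lift k (0 : d →ₗ⁅k⁆ k)

lemma eps_iota (x : d) : epsA k d (iotaU k d x) = 0 := by
  have h : epsA k d (iotaU k d x) = (0 : d →ₗ⁅k⁆ k) x :=
    UniversalEnvelopingAlgebra.lift_ι_apply k _ x
  simpa using h

lemma emb12_tmul (x y : Uk) :
    emb12 k d (x ⊗ₜ[k] y) = x ⊗ₜ[k] (y ⊗ₜ[k] (1 : Uk)) := by simp [emb12]

lemma emb13_tmul (x y : Uk) :
    emb13 k d (x ⊗ₜ[k] y) = x ⊗ₜ[k] ((1 : Uk) ⊗ₜ[k] y) := by simp [emb13]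

lemma swap12_tmul (x y z : Uk) :
    swap12 k d (x ⊗ₜ[k] (y ⊗ₜ[k] z)) = y ⊗ₜ[k] (x ⊗ₜ[k] z) := by simp [swap12]

lemma cyc_tmul (x y z : Uk) :
    cyc k d (x ⊗ₜ[k] (y ⊗ₜ[k] z)) = y ⊗ₜ[k] (z ⊗ₜ[k] x) := by simp [cyc]

/-- `emb12` as an algebra homomorphism. -/
def emb12A : Uk ⊗[k] Uk →ₐ[k] Uk ⊗[k] (Uk ⊗[k] Uk) :=
  Algebra.TensorProduct.map (AlgHom.id k Uk) Algebra.TensorProduct.includeLeft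

/-- `emb13` as an algebra homomorphism. -/
def emb13A : Uk ⊗[k] Uk →ₐ[k] Uk ⊗[k] (Uk ⊗[k] Uk) :=
  Algebra.TensorProduct.map (AlgHom.id k Uk) Algebra.TensorProduct.includeRight

lemma emb12_eq : emb12 k d = (emb12A k d).toLinearMap := by
  apply TensorProduct.ext'
  intro x y
  simp [emb12_tmul, emb12A]

lemma emb13_eq : emb13 k d = (emb13A k d).toLinearMap := by
  apply TensorProduct.ext'
  intro x y
  simp [emb13_tmul, emb13A]

lemma emb12_mul (u v : Uk ⊗[k] Uk) :
    emb12 k d (u * v) = emb12 k d u * emb12 k d v := by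
  rw [emb12_eq]; exact map_mul (emb12A k d) u v

lemma emb13_mul (u v : Uk ⊗[k] Uk) :
    emb13 k d (u * v) = emb13 k d u * emb13 k d v := by
  rw [emb13_eq]; exact map_mul (emb13A k d) u v

lemma e23_mul (u v : Uk ⊗[k] Uk) :
    (1 : Uk) ⊗ₜ[k] (u * v) = ((1 : Uk) ⊗ₜ[k] u) * ((1 : Uk) ⊗ₜ[k] v) := by
  rw [Algebra.TensorProduct.tmul_mul_tmul, one_mul]

/-- `swap12` as an algebra equivalence. -/
def swap12A : (Uk ⊗[k] (Uk ⊗[k] Uk)) ≃ₐ[k] Uk ⊗[k] (Uk ⊗[k] Uk) :=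
  (Algebra.TensorProduct.assoc k k k Uk Uk Uk).symm.trans
    ((Algebra.TensorProduct.congr (Algebra.TensorProduct.comm k Uk Uk)
        (AlgEquiv.refl (A₁ := Uk))).trans (Algebra.TensorProduct.assoc k k k Uk Uk Uk))

lemma swap12_eq : swap12 k d = (swap12A k d).toLinearMap := by
  apply ext3
  intro x y z
  simp [swap12_tmul, swap12A, Algebra.TensorProduct.congr_apply,
    Algebra.TensorProduct.assoc_symm_tmul, Algebra.TensorProduct.assoc_tmul,
    Algebra.TensorProduct.comm_tmul]

/-- `cyc` as an algebra equivalence. -/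
def cycA : (Uk ⊗[k] (Uk ⊗[k] Uk)) ≃ₐ[k] Uk ⊗[k] (Uk ⊗[k] Uk) :=
  (Algebra.TensorProduct.comm k Uk (Uk ⊗[k] Uk)).trans (Algebra.TensorProduct.assoc k k k Uk Uk Uk)

lemma cyc_eq : cyc k d = (cycA k d).toLinearMap := by
  apply ext3
  intro x y z
  simp [cyc_tmul, cycA, Algebra.TensorProduct.comm_tmul, Algebra.TensorProduct.assoc_tmul]

lemma swap12_mul (u v : Uk ⊗[k] (Uk ⊗[k] Uk)) :
    swap12 k d (u * v) = swap12 k d u * swap12 k d v := by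
  rw [swap12_eq]; exact map_mul (swap12A k d) u v

lemma cyc_mul (u v : Uk ⊗[k] (Uk ⊗[k] Uk)) :
    cyc k d (u * v) = cyc k d u * cyc k d v := by
  rw [cyc_eq]; exact map_mul (cycA k d) u v

end AuxLemmas

section AuxLemmas2

lemma rU_tmul (x y : d) : rU k d (x ⊗ₜ[k] y) = iotaU k d x ⊗ₜ[k] iotaU k d y := rfl

lemma rU_comm (t : d ⊗[k] d) :
    rU k d (TensorProduct.comm k d d t) = TensorProduct.comm k Uk Uk (rU k d t) := by
  have h : (rU k d) ∘ₗ (TensorProduct.comm k d d).toLinearMap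
      = (TensorProduct.comm k Uk Uk).toLinearMap ∘ₗ rU k d := by
    apply TensorProduct.ext'
    intro x y
    simp [rU_tmul]
  exact LinearMap.congr_fun h t

lemma comulIdU_rU (t : d ⊗[k] d) :
    comulIdU k d (rU k d t) = emb13 k d (rU k d t) + (1 : Uk) ⊗ₜ[k] rU k d t := by
  have h : (comulIdU k d) ∘ₗ rU k d
      = (emb13 k d) ∘ₗ rU k d + (TensorProduct.mk k Uk (Uk ⊗[k] Uk) 1) ∘ₗ rU k d := by
    apply TensorProduct.ext'
    intro x y
    simp [comulIdU, rU_tmul, comul_iota, TensorProduct.add_tmul, emb13_tmul]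
  exact LinearMap.congr_fun h t

lemma idComulU_rU (t : d ⊗[k] d) :
    idComulU k d (rU k d t) = emb12 k d (rU k d t) + emb13 k d (rU k d t) := by
  have h : (idComulU k d) ∘ₗ rU k d = (emb12 k d) ∘ₗ rU k d + (emb13 k d) ∘ₗ rU k d := by
    apply TensorProduct.ext'
    intro x y
    simp [idComulU, rU_tmul, comul_iota, TensorProduct.tmul_add, emb12_tmul, emb13_tmul]
  exact LinearMap.congr_fun h t

lemma comulIdU_t1 (x : Uk) (hx : ∃ y, x = iotaU k d y) :
    comulIdU k d (x ⊗ₜ[k] (1 : Uk))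
      = x ⊗ₜ[k] ((1 : Uk) ⊗ₜ[k] (1 : Uk)) + (1 : Uk) ⊗ₜ[k] (x ⊗ₜ[k] (1 : Uk)) := by
  obtain ⟨y, rfl⟩ := hx
  simp [comulIdU, comul_iota, TensorProduct.add_tmul]

lemma comulIdU_1t (x : Uk) :
    comulIdU k d ((1 : Uk) ⊗ₜ[k] x) = (1 : Uk) ⊗ₜ[k] ((1 : Uk) ⊗ₜ[k] x) := by
  simp [comulIdU, Algebra.TensorProduct.one_def]

lemma idComulU_t1 (x : Uk) :
    idComulU k d (x ⊗ₜ[k] (1 : Uk)) = x ⊗ₜ[k] ((1 : Uk) ⊗ₜ[k] (1 : Uk)) := by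
  simp [idComulU, Algebra.TensorProduct.one_def]

lemma idComulU_1t (x : Uk) (hx : ∃ y, x = iotaU k d y) :
    idComulU k d ((1 : Uk) ⊗ₜ[k] x)
      = (1 : Uk) ⊗ₜ[k] (x ⊗ₜ[k] (1 : Uk)) + (1 : Uk) ⊗ₜ[k] ((1 : Uk) ⊗ₜ[k] x) := by
  obtain ⟨y, rfl⟩ := hx
  simp [idComulU, comul_iota, TensorProduct.tmul_add]

-- generator actions of swap12 and cyc
lemma swap12_emb12_rU (t : d ⊗[k] d) :
    swap12 k d (emb12 k d (rU k d t)) = emb12 k d (rU k d (TensorProduct.comm k d d t)) := by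
  have h : (swap12 k d) ∘ₗ (emb12 k d) ∘ₗ rU k d
      = (emb12 k d) ∘ₗ rU k d ∘ₗ (TensorProduct.comm k d d).toLinearMap := by
    apply TensorProduct.ext'
    intro x y
    simp [rU_tmul, emb12_tmul, swap12_tmul]
  exact LinearMap.congr_fun h t

lemma swap12_emb13_rU (t : d ⊗[k] d) :
    swap12 k d (emb13 k d (rU k d t)) = (1 : Uk) ⊗ₜ[k] rU k d t := by
  have h : (swap12 k d) ∘ₗ (emb13 k d) ∘ₗ rU k d
      = (TensorProduct.mk k Uk (Uk ⊗[k] Uk) 1) ∘ₗ rU k d := by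
    apply TensorProduct.ext'
    intro x y
    simp [rU_tmul, emb13_tmul, swap12_tmul]
  exact LinearMap.congr_fun h t

lemma swap12_e23_rU (t : d ⊗[k] d) :
    swap12 k d ((1 : Uk) ⊗ₜ[k] rU k d t) = emb13 k d (rU k d t) := by
  have h : (swap12 k d) ∘ₗ (TensorProduct.mk k Uk (Uk ⊗[k] Uk) 1) ∘ₗ rU k d
      = (emb13 k d) ∘ₗ rU k d := by
    apply TensorProduct.ext'
    intro x y
    simp [rU_tmul, emb13_tmul, swap12_tmul]
  exact LinearMap.congr_fun h t

lemma cyc_emb12_rU (t : d ⊗[k] d) :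
    cyc k d (emb12 k d (rU k d t)) = emb13 k d (rU k d (TensorProduct.comm k d d t)) := by
  have h : (cyc k d) ∘ₗ (emb12 k d) ∘ₗ rU k d
      = (emb13 k d) ∘ₗ rU k d ∘ₗ (TensorProduct.comm k d d).toLinearMap := by
    apply TensorProduct.ext'
    intro x y
    simp [rU_tmul, emb12_tmul, emb13_tmul, cyc_tmul]
  exact LinearMap.congr_fun h t

lemma cyc_emb13_rU (t : d ⊗[k] d) :
    cyc k d (emb13 k d (rU k d t)) = (1 : Uk) ⊗ₜ[k] rU k d (TensorProduct.comm k d d t) := by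
  have h : (cyc k d) ∘ₗ (emb13 k d) ∘ₗ rU k d
      = (TensorProduct.mk k Uk (Uk ⊗[k] Uk) 1) ∘ₗ rU k d ∘ₗ
          (TensorProduct.comm k d d).toLinearMap := by
    apply TensorProduct.ext'
    intro x y
    simp [rU_tmul, emb13_tmul, cyc_tmul]
  exact LinearMap.congr_fun h t

lemma cyc_e23_rU (t : d ⊗[k] d) :
    cyc k d ((1 : Uk) ⊗ₜ[k] rU k d t) = emb12 k d (rU k d t) := by
  have h : (cyc k d) ∘ₗ (TensorProduct.mk k Uk (Uk ⊗[k] Uk) 1) ∘ₗ rU k d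
      = (emb12 k d) ∘ₗ rU k d := by
    apply TensorProduct.ext'
    intro x y
    simp [rU_tmul, emb12_tmul, cyc_tmul]
  exact LinearMap.congr_fun h t

end AuxLemmas2

section AuxLemmas3

/-- Apply the counit on the third tensor factor: `x ⊗ y ⊗ z ↦ ε(z) • (x ⊗ y)`. -/
def E3 : Uk ⊗[k] (Uk ⊗[k] Uk) →ₐ[k] Uk ⊗[k] Uk :=
  Algebra.TensorProduct.map (AlgHom.id k Uk)
    ((Algebra.TensorProduct.rid k k Uk).toAlgHom.comp
      (Algebra.TensorProduct.map (AlgHom.id k Uk) (epsA k d)))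

lemma E3_tmul (x y z : Uk) :
    E3 k d (x ⊗ₜ[k] (y ⊗ₜ[k] z)) = epsA k d z • (x ⊗ₜ[k] y) := by
  simp [E3, Algebra.TensorProduct.rid_tmul, TensorProduct.tmul_smul]

lemma E3_emb12 (u : Uk ⊗[k] Uk) : E3 k d (emb12 k d u) = u := by
  have h : (E3 k d).toLinearMap ∘ₗ emb12 k d = LinearMap.id := by
    apply TensorProduct.ext'
    intro x y
    simp [emb12_tmul, E3_tmul, epsA]
  exact LinearMap.congr_fun h u

lemma E3_emb13_rU (t : d ⊗[k] d) : E3 k d (emb13 k d (rU k d t)) = 0 := by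
  have h : (E3 k d).toLinearMap ∘ₗ (emb13 k d) ∘ₗ rU k d = 0 := by
    apply TensorProduct.ext'
    intro x y
    simp [rU_tmul, emb13_tmul, E3_tmul, eps_iota]
  exact LinearMap.congr_fun h t

lemma E3_e23_rU (t : d ⊗[k] d) : E3 k d ((1 : Uk) ⊗ₜ[k] rU k d t) = 0 := by
  have h : (E3 k d).toLinearMap ∘ₗ (TensorProduct.mk k Uk (Uk ⊗[k] Uk) 1) ∘ₗ rU k d = 0 := by
    apply TensorProduct.ext'
    intro x y
    simp [rU_tmul, E3_tmul, eps_iota]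
  exact LinearMap.congr_fun h t

lemma E3_s1 (x : Uk) :
    E3 k d (x ⊗ₜ[k] ((1 : Uk) ⊗ₜ[k] (1 : Uk))) = x ⊗ₜ[k] (1 : Uk) := by
  simp [E3_tmul, epsA]

lemma E3_s2 (x : Uk) :
    E3 k d ((1 : Uk) ⊗ₜ[k] (x ⊗ₜ[k] (1 : Uk))) = (1 : Uk) ⊗ₜ[k] x := by
  simp [E3_tmul, epsA]

lemma E3_s3 (y : d) :
    E3 k d ((1 : Uk) ⊗ₜ[k] ((1 : Uk) ⊗ₜ[k] iotaU k d y)) = 0 := by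
  simp [E3_tmul, eps_iota]

-- commutation lemmas
lemma comm12_s3 (t : d ⊗[k] d) (c : Uk) :
    ((1 : Uk) ⊗ₜ[k] ((1 : Uk) ⊗ₜ[k] c)) * emb12 k d (rU k d t)
      = emb12 k d (rU k d t) * ((1 : Uk) ⊗ₜ[k] ((1 : Uk) ⊗ₜ[k] c)) := by
  induction t using TensorProduct.induction_on with
  | zero => simp
  | tmul x y => simp [rU_tmul, emb12_tmul, Algebra.TensorProduct.tmul_mul_tmul]
  | add u v hu hv => rw [map_add, map_add, mul_add, add_mul, hu, hv]

lemma comm13_s2 (t : d ⊗[k] d) (c : Uk) :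
    ((1 : Uk) ⊗ₜ[k] (c ⊗ₜ[k] (1 : Uk))) * emb13 k d (rU k d t)
      = emb13 k d (rU k d t) * ((1 : Uk) ⊗ₜ[k] (c ⊗ₜ[k] (1 : Uk))) := by
  induction t using TensorProduct.induction_on with
  | zero => simp
  | tmul x y => simp [rU_tmul, emb13_tmul, Algebra.TensorProduct.tmul_mul_tmul]
  | add u v hu hv => rw [map_add, map_add, mul_add, add_mul, hu, hv]

lemma comm23_s1 (u : Uk ⊗[k] Uk) (c : Uk) :
    (c ⊗ₜ[k] ((1 : Uk) ⊗ₜ[k] (1 : Uk))) * ((1 : Uk) ⊗ₜ[k] u)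
      = ((1 : Uk) ⊗ₜ[k] u) * (c ⊗ₜ[k] ((1 : Uk) ⊗ₜ[k] (1 : Uk))) := by
  rw [Algebra.TensorProduct.tmul_mul_tmul, Algebra.TensorProduct.tmul_mul_tmul,
    ← Algebra.TensorProduct.one_def, one_mul, mul_one, one_mul, mul_one]

end AuxLemmas3

section AbstractIdentities

theorem main_identity {A : Type*} [Ring A] (a b c t1 t2 t3 : A)
    (h21 : t2 * t1 = t1 * t2) (h31 : t3 * t1 = t1 * t3) (h32 : t3 * t2 = t2 * t3)
    (hA : t3 * a = a * t3) (hB : t2 * b = b * t2) (hC : t1 * c = c * t1) :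
    (a + t1 - t2) * (b + c + t1 + t2 - t3)
      - ((c + t2 - t3) * (a + b + t1 - t2 - t3)
          - (b + t1 - t3) * (-a + c + t2 - t1 - t3))
    = ((a * b - b * a + a * t3) + (b * c - c * b - b * t2) + (a * c - c * a + c * t1))
      + ((a * (t1 + t2) - (t1 + t2) * a) - (b * (t1 + t3) - (t1 + t3) * b)
          + (c * (t2 + t3) - (t2 + t3) * c)) := by
  simp only [mul_add, add_mul, mul_sub, sub_mul, neg_mul, mul_neg, h21, h31, h32, hA, hB, hC]
  abel

theorem eps_identity {A : Type*} [Ring A] (R T1 T2 : A) (h : T2 * T1 = T1 * T2) :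
    (R + T1 - T2) * (T1 + T2) - (T2 * (R + T1 - T2) - T1 * (-R + T2 - T1))
      = R * (T1 + T2) - (T1 + T2) * R := by
  simp only [mul_add, add_mul, mul_sub, sub_mul, neg_mul, mul_neg, h]
  abel

end AbstractIdentities

theorem neg_helper1 {A : Type*} [Ring A] (a b c : A) :
    -a * -b - -b * -a + -a * c = a * b - b * a - a * c := by noncomm_ring

theorem neg_helper2 {A : Type*} [Ring A] (a b c : A) :
    -b * a - a * -b - -b * c = a * b - b * a + b * c := by noncomm_ring
theorem rank_one_jacobi_iff_modified_CYB [FiniteDimensional k d]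
    (r : d ⊗[k] d) (hr : TensorProduct.comm k d d r = -r) (s : d) :
    (emb12 k d (alphaOf k d r s) * comulIdU k d (alphaOf k d r s) =
        ((1 : Uk) ⊗ₜ[k] alphaOf k d r s) * idComulU k d (alphaOf k d r s)
          - swap12 k d (((1 : Uk) ⊗ₜ[k] alphaOf k d r s) *
              idComulU k d (alphaOf k d r s)))
    ↔
    ((rU k d r * comulU k d (iotaU k d s) - comulU k d (iotaU k d s) * rU k d r = 0)
      ∧ cybTerm k d r s + cyc k d (cybTerm k d r s) + cyc k d (cyc k d (cybTerm k d r s))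
          = 0) := by
  have hneg : rU k d (TensorProduct.comm k d d r) = - rU k d r := by rw [hr, map_neg]
  have h1 : emb12 k d (alphaOf k d r s) = (emb12 k d (rU k d r)) + (iotaU k d s ⊗ₜ[k] ((1 : Uk) ⊗ₜ[k] (1 : Uk))) - ((1 : Uk) ⊗ₜ[k] (iotaU k d s ⊗ₜ[k] (1 : Uk))) := by
    simp only [alphaOf, map_sub, map_add, emb12_tmul]
  have h2 : comulIdU k d (alphaOf k d r s) = (emb13 k d (rU k d r)) + ((1 : Uk) ⊗ₜ[k] rU k d r) + (iotaU k d s ⊗ₜ[k] ((1 : Uk) ⊗ₜ[k] (1 : Uk))) + ((1 : Uk) ⊗ₜ[k] (iotaU k d s ⊗ₜ[k] (1 : Uk))) - ((1 : Uk) ⊗ₜ[k] ((1 : Uk) ⊗ₜ[k] iotaU k d s)) := by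
    simp only [alphaOf, map_sub, map_add, comulIdU_rU,
      comulIdU_t1 k d (iotaU k d s) ⟨s, rfl⟩, comulIdU_1t]
    abel
  have h3 : ((1 : Uk) ⊗ₜ[k] alphaOf k d r s) = ((1 : Uk) ⊗ₜ[k] rU k d r) + ((1 : Uk) ⊗ₜ[k] (iotaU k d s ⊗ₜ[k] (1 : Uk))) - ((1 : Uk) ⊗ₜ[k] ((1 : Uk) ⊗ₜ[k] iotaU k d s)) := by
    simp only [alphaOf, TensorProduct.tmul_sub, TensorProduct.tmul_add]
  have h4 : idComulU k d (alphaOf k d r s) = (emb12 k d (rU k d r)) + (emb13 k d (rU k d r)) + (iotaU k d s ⊗ₜ[k] ((1 : Uk) ⊗ₜ[k] (1 : Uk))) - ((1 : Uk) ⊗ₜ[k] (iotaU k d s ⊗ₜ[k] (1 : Uk))) - ((1 : Uk) ⊗ₜ[k] ((1 : Uk) ⊗ₜ[k] iotaU k d s)) := by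
    simp only [alphaOf, map_sub, map_add, idComulU_rU, idComulU_t1,
      idComulU_1t k d (iotaU k d s) ⟨s, rfl⟩]
    abel
  have h5 : swap12 k d ((((1 : Uk) ⊗ₜ[k] rU k d r) + ((1 : Uk) ⊗ₜ[k] (iotaU k d s ⊗ₜ[k] (1 : Uk))) - ((1 : Uk) ⊗ₜ[k] ((1 : Uk) ⊗ₜ[k] iotaU k d s))) * ((emb12 k d (rU k d r)) + (emb13 k d (rU k d r)) + (iotaU k d s ⊗ₜ[k] ((1 : Uk) ⊗ₜ[k] (1 : Uk))) - ((1 : Uk) ⊗ₜ[k] (iotaU k d s ⊗ₜ[k] (1 : Uk))) - ((1 : Uk) ⊗ₜ[k] ((1 : Uk) ⊗ₜ[k] iotaU k d s))))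
      = ((emb13 k d (rU k d r)) + (iotaU k d s ⊗ₜ[k] ((1 : Uk) ⊗ₜ[k] (1 : Uk))) - ((1 : Uk) ⊗ₜ[k] ((1 : Uk) ⊗ₜ[k] iotaU k d s))) * (-(emb12 k d (rU k d r)) + ((1 : Uk) ⊗ₜ[k] rU k d r) + ((1 : Uk) ⊗ₜ[k] (iotaU k d s ⊗ₜ[k] (1 : Uk))) - (iotaU k d s ⊗ₜ[k] ((1 : Uk) ⊗ₜ[k] (1 : Uk))) - ((1 : Uk) ⊗ₜ[k] ((1 : Uk) ⊗ₜ[k] iotaU k d s))) := by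
    rw [swap12_mul]
    congr 1
    · simp only [map_sub, map_add, swap12_e23_rU, swap12_tmul]
    · simp only [map_sub, map_add, swap12_emb12_rU, swap12_emb13_rU, swap12_tmul,
        hneg, map_neg]
  have h0 : cybTerm k d r s = (emb12 k d (rU k d r)) * (emb13 k d (rU k d r)) - (emb13 k d (rU k d r)) * (emb12 k d (rU k d r)) + (emb12 k d (rU k d r)) * ((1 : Uk) ⊗ₜ[k] ((1 : Uk) ⊗ₜ[k] iotaU k d s)) := rfl
  have h7 : cyc k d (cybTerm k d r s) = (emb13 k d (rU k d r)) * ((1 : Uk) ⊗ₜ[k] rU k d r) - ((1 : Uk) ⊗ₜ[k] rU k d r) * (emb13 k d (rU k d r)) - (emb13 k d (rU k d r)) * ((1 : Uk) ⊗ₜ[k] (iotaU k d s ⊗ₜ[k] (1 : Uk))) := by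
    rw [cybTerm, map_add, map_sub, cyc_mul, cyc_mul, cyc_mul, cyc_emb12_rU, cyc_emb13_rU,
      cyc_tmul, hneg, map_neg, TensorProduct.tmul_neg]
    exact neg_helper1 (A := Uk ⊗[k] (Uk ⊗[k] Uk)) _ _ _
  have h8 : cyc k d ((emb13 k d (rU k d r)) * ((1 : Uk) ⊗ₜ[k] rU k d r) - ((1 : Uk) ⊗ₜ[k] rU k d r) * (emb13 k d (rU k d r)) - (emb13 k d (rU k d r)) * ((1 : Uk) ⊗ₜ[k] (iotaU k d s ⊗ₜ[k] (1 : Uk))))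
      = (emb12 k d (rU k d r)) * ((1 : Uk) ⊗ₜ[k] rU k d r) - ((1 : Uk) ⊗ₜ[k] rU k d r) * (emb12 k d (rU k d r)) + ((1 : Uk) ⊗ₜ[k] rU k d r) * (iotaU k d s ⊗ₜ[k] ((1 : Uk) ⊗ₜ[k] (1 : Uk))) := by
    rw [map_sub, map_sub, cyc_mul, cyc_mul, cyc_mul, cyc_emb13_rU, cyc_e23_rU, cyc_tmul,
      hneg, TensorProduct.tmul_neg]
    exact neg_helper2 (A := Uk ⊗[k] (Uk ⊗[k] Uk)) _ _ _
  have c21 : ((1 : Uk) ⊗ₜ[k] (iotaU k d s ⊗ₜ[k] (1 : Uk))) * (iotaU k d s ⊗ₜ[k] ((1 : Uk) ⊗ₜ[k] (1 : Uk))) = (iotaU k d s ⊗ₜ[k] ((1 : Uk) ⊗ₜ[k] (1 : Uk))) * ((1 : Uk) ⊗ₜ[k] (iotaU k d s ⊗ₜ[k] (1 : Uk))) := by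
    simp [Algebra.TensorProduct.tmul_mul_tmul]
  have c31 : ((1 : Uk) ⊗ₜ[k] ((1 : Uk) ⊗ₜ[k] iotaU k d s)) * (iotaU k d s ⊗ₜ[k] ((1 : Uk) ⊗ₜ[k] (1 : Uk))) = (iotaU k d s ⊗ₜ[k] ((1 : Uk) ⊗ₜ[k] (1 : Uk))) * ((1 : Uk) ⊗ₜ[k] ((1 : Uk) ⊗ₜ[k] iotaU k d s)) := by
    simp [Algebra.TensorProduct.tmul_mul_tmul]
  have c32 : ((1 : Uk) ⊗ₜ[k] ((1 : Uk) ⊗ₜ[k] iotaU k d s)) * ((1 : Uk) ⊗ₜ[k] (iotaU k d s ⊗ₜ[k] (1 : Uk))) = ((1 : Uk) ⊗ₜ[k] (iotaU k d s ⊗ₜ[k] (1 : Uk))) * ((1 : Uk) ⊗ₜ[k] ((1 : Uk) ⊗ₜ[k] iotaU k d s)) := by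
    simp [Algebra.TensorProduct.tmul_mul_tmul]
  have cA : ((1 : Uk) ⊗ₜ[k] ((1 : Uk) ⊗ₜ[k] iotaU k d s)) * (emb12 k d (rU k d r)) = (emb12 k d (rU k d r)) * ((1 : Uk) ⊗ₜ[k] ((1 : Uk) ⊗ₜ[k] iotaU k d s)) := comm12_s3 k d r (iotaU k d s)
  have cB : ((1 : Uk) ⊗ₜ[k] (iotaU k d s ⊗ₜ[k] (1 : Uk))) * (emb13 k d (rU k d r)) = (emb13 k d (rU k d r)) * ((1 : Uk) ⊗ₜ[k] (iotaU k d s ⊗ₜ[k] (1 : Uk))) := comm13_s2 k d r (iotaU k d s)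
  have cC : (iotaU k d s ⊗ₜ[k] ((1 : Uk) ⊗ₜ[k] (1 : Uk))) * ((1 : Uk) ⊗ₜ[k] rU k d r) = ((1 : Uk) ⊗ₜ[k] rU k d r) * (iotaU k d s ⊗ₜ[k] ((1 : Uk) ⊗ₜ[k] (1 : Uk))) := comm23_s1 k d (rU k d r) (iotaU k d s)
  have hmain := main_identity (emb12 k d (rU k d r)) (emb13 k d (rU k d r)) ((1 : Uk) ⊗ₜ[k] rU k d r) (iotaU k d s ⊗ₜ[k] ((1 : Uk) ⊗ₜ[k] (1 : Uk))) ((1 : Uk) ⊗ₜ[k] (iotaU k d s ⊗ₜ[k] (1 : Uk))) ((1 : Uk) ⊗ₜ[k] ((1 : Uk) ⊗ₜ[k] iotaU k d s)) c21 c31 c32 cA cB cC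
  have hT12 : (iotaU k d s ⊗ₜ[k] ((1 : Uk) ⊗ₜ[k] (1 : Uk))) + ((1 : Uk) ⊗ₜ[k] (iotaU k d s ⊗ₜ[k] (1 : Uk))) = emb12 k d (iotaU k d s ⊗ₜ[k] (1 : Uk) + (1 : Uk) ⊗ₜ[k] iotaU k d s) := by
    rw [map_add, emb12_tmul, emb12_tmul]
  have hT13 : (iotaU k d s ⊗ₜ[k] ((1 : Uk) ⊗ₜ[k] (1 : Uk))) + ((1 : Uk) ⊗ₜ[k] ((1 : Uk) ⊗ₜ[k] iotaU k d s)) = emb13 k d (iotaU k d s ⊗ₜ[k] (1 : Uk) + (1 : Uk) ⊗ₜ[k] iotaU k d s) := by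
    rw [map_add, emb13_tmul, emb13_tmul]
  have hT23 : ((1 : Uk) ⊗ₜ[k] (iotaU k d s ⊗ₜ[k] (1 : Uk))) + ((1 : Uk) ⊗ₜ[k] ((1 : Uk) ⊗ₜ[k] iotaU k d s)) = (1 : Uk) ⊗ₜ[k] (iotaU k d s ⊗ₜ[k] (1 : Uk) + (1 : Uk) ⊗ₜ[k] iotaU k d s) := by
    rw [TensorProduct.tmul_add]
  rw [h1, h2, h3, h4, h5, comul_iota, h7, h8, h0]
  constructor
  · intro h
    have hE := congrArg (E3 k d) h
    simp only [map_mul, map_sub, map_add, map_neg, E3_emb12, E3_emb13_rU, E3_e23_rU,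
      E3_s1, E3_s2, E3_s3, add_zero, zero_add, sub_zero] at hE
    have hcomm : ((1 : Uk) ⊗ₜ[k] iotaU k d s) * (iotaU k d s ⊗ₜ[k] (1 : Uk))
        = (iotaU k d s ⊗ₜ[k] (1 : Uk)) * ((1 : Uk) ⊗ₜ[k] iotaU k d s) := by
      simp [Algebra.TensorProduct.tmul_mul_tmul]
    have hid := eps_identity (rU k d r) (iotaU k d s ⊗ₜ[k] (1 : Uk))
      ((1 : Uk) ⊗ₜ[k] iotaU k d s) hcomm
    rw [hE, sub_self] at hid
    have hc1 : rU k d r * (iotaU k d s ⊗ₜ[k] (1 : Uk) + (1 : Uk) ⊗ₜ[k] iotaU k d s) - (iotaU k d s ⊗ₜ[k] (1 : Uk) + (1 : Uk) ⊗ₜ[k] iotaU k d s) * rU k d r = 0 := hid.symm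
    refine ⟨hc1, ?_⟩
    have z12 : (emb12 k d (rU k d r)) * ((iotaU k d s ⊗ₜ[k] ((1 : Uk) ⊗ₜ[k] (1 : Uk))) + ((1 : Uk) ⊗ₜ[k] (iotaU k d s ⊗ₜ[k] (1 : Uk)))) - ((iotaU k d s ⊗ₜ[k] ((1 : Uk) ⊗ₜ[k] (1 : Uk))) + ((1 : Uk) ⊗ₜ[k] (iotaU k d s ⊗ₜ[k] (1 : Uk)))) * (emb12 k d (rU k d r)) = 0 := by
      rw [hT12, ← emb12_mul, ← emb12_mul, ← map_sub, hc1, map_zero]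
    have z13 : (emb13 k d (rU k d r)) * ((iotaU k d s ⊗ₜ[k] ((1 : Uk) ⊗ₜ[k] (1 : Uk))) + ((1 : Uk) ⊗ₜ[k] ((1 : Uk) ⊗ₜ[k] iotaU k d s))) - ((iotaU k d s ⊗ₜ[k] ((1 : Uk) ⊗ₜ[k] (1 : Uk))) + ((1 : Uk) ⊗ₜ[k] ((1 : Uk) ⊗ₜ[k] iotaU k d s))) * (emb13 k d (rU k d r)) = 0 := by
      rw [hT13, ← emb13_mul, ← emb13_mul, ← map_sub, hc1, map_zero]
    have z23 : ((1 : Uk) ⊗ₜ[k] rU k d r) * (((1 : Uk) ⊗ₜ[k] (iotaU k d s ⊗ₜ[k] (1 : Uk))) + ((1 : Uk) ⊗ₜ[k] ((1 : Uk) ⊗ₜ[k] iotaU k d s))) - (((1 : Uk) ⊗ₜ[k] (iotaU k d s ⊗ₜ[k] (1 : Uk))) + ((1 : Uk) ⊗ₜ[k] ((1 : Uk) ⊗ₜ[k] iotaU k d s))) * ((1 : Uk) ⊗ₜ[k] rU k d r) = 0 := by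
      rw [hT23, ← e23_mul, ← e23_mul, ← TensorProduct.tmul_sub, hc1,
        TensorProduct.tmul_zero]
    have hz : ((emb12 k d (rU k d r)) + (iotaU k d s ⊗ₜ[k] ((1 : Uk) ⊗ₜ[k] (1 : Uk))) - ((1 : Uk) ⊗ₜ[k] (iotaU k d s ⊗ₜ[k] (1 : Uk)))) * ((emb13 k d (rU k d r)) + ((1 : Uk) ⊗ₜ[k] rU k d r) + (iotaU k d s ⊗ₜ[k] ((1 : Uk) ⊗ₜ[k] (1 : Uk))) + ((1 : Uk) ⊗ₜ[k] (iotaU k d s ⊗ₜ[k] (1 : Uk))) - ((1 : Uk) ⊗ₜ[k] ((1 : Uk) ⊗ₜ[k] iotaU k d s)))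
        - ((((1 : Uk) ⊗ₜ[k] rU k d r) + ((1 : Uk) ⊗ₜ[k] (iotaU k d s ⊗ₜ[k] (1 : Uk))) - ((1 : Uk) ⊗ₜ[k] ((1 : Uk) ⊗ₜ[k] iotaU k d s))) * ((emb12 k d (rU k d r)) + (emb13 k d (rU k d r)) + (iotaU k d s ⊗ₜ[k] ((1 : Uk) ⊗ₜ[k] (1 : Uk))) - ((1 : Uk) ⊗ₜ[k] (iotaU k d s ⊗ₜ[k] (1 : Uk))) - ((1 : Uk) ⊗ₜ[k] ((1 : Uk) ⊗ₜ[k] iotaU k d s)))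
            - ((emb13 k d (rU k d r)) + (iotaU k d s ⊗ₜ[k] ((1 : Uk) ⊗ₜ[k] (1 : Uk))) - ((1 : Uk) ⊗ₜ[k] ((1 : Uk) ⊗ₜ[k] iotaU k d s))) * (-(emb12 k d (rU k d r)) + ((1 : Uk) ⊗ₜ[k] rU k d r) + ((1 : Uk) ⊗ₜ[k] (iotaU k d s ⊗ₜ[k] (1 : Uk))) - (iotaU k d s ⊗ₜ[k] ((1 : Uk) ⊗ₜ[k] (1 : Uk))) - ((1 : Uk) ⊗ₜ[k] ((1 : Uk) ⊗ₜ[k] iotaU k d s)))) = 0 := by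
      rw [h, sub_self]
    rw [hmain, z12, z13, z23] at hz
    simpa only [sub_zero, add_zero] using hz
  · rintro ⟨hc1, hC⟩
    have z12 : (emb12 k d (rU k d r)) * ((iotaU k d s ⊗ₜ[k] ((1 : Uk) ⊗ₜ[k] (1 : Uk))) + ((1 : Uk) ⊗ₜ[k] (iotaU k d s ⊗ₜ[k] (1 : Uk)))) - ((iotaU k d s ⊗ₜ[k] ((1 : Uk) ⊗ₜ[k] (1 : Uk))) + ((1 : Uk) ⊗ₜ[k] (iotaU k d s ⊗ₜ[k] (1 : Uk)))) * (emb12 k d (rU k d r)) = 0 := by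
      rw [hT12, ← emb12_mul, ← emb12_mul, ← map_sub, hc1, map_zero]
    have z13 : (emb13 k d (rU k d r)) * ((iotaU k d s ⊗ₜ[k] ((1 : Uk) ⊗ₜ[k] (1 : Uk))) + ((1 : Uk) ⊗ₜ[k] ((1 : Uk) ⊗ₜ[k] iotaU k d s))) - ((iotaU k d s ⊗ₜ[k] ((1 : Uk) ⊗ₜ[k] (1 : Uk))) + ((1 : Uk) ⊗ₜ[k] ((1 : Uk) ⊗ₜ[k] iotaU k d s))) * (emb13 k d (rU k d r)) = 0 := by
      rw [hT13, ← emb13_mul, ← emb13_mul, ← map_sub, hc1, map_zero]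
    have z23 : ((1 : Uk) ⊗ₜ[k] rU k d r) * (((1 : Uk) ⊗ₜ[k] (iotaU k d s ⊗ₜ[k] (1 : Uk))) + ((1 : Uk) ⊗ₜ[k] ((1 : Uk) ⊗ₜ[k] iotaU k d s))) - (((1 : Uk) ⊗ₜ[k] (iotaU k d s ⊗ₜ[k] (1 : Uk))) + ((1 : Uk) ⊗ₜ[k] ((1 : Uk) ⊗ₜ[k] iotaU k d s))) * ((1 : Uk) ⊗ₜ[k] rU k d r) = 0 := by
      rw [hT23, ← e23_mul, ← e23_mul, ← TensorProduct.tmul_sub, hc1,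
        TensorProduct.tmul_zero]
    rw [z12, z13, z23, hC] at hmain
    have hz : ((emb12 k d (rU k d r)) + (iotaU k d s ⊗ₜ[k] ((1 : Uk) ⊗ₜ[k] (1 : Uk))) - ((1 : Uk) ⊗ₜ[k] (iotaU k d s ⊗ₜ[k] (1 : Uk)))) * ((emb13 k d (rU k d r)) + ((1 : Uk) ⊗ₜ[k] rU k d r) + (iotaU k d s ⊗ₜ[k] ((1 : Uk) ⊗ₜ[k] (1 : Uk))) + ((1 : Uk) ⊗ₜ[k] (iotaU k d s ⊗ₜ[k] (1 : Uk))) - ((1 : Uk) ⊗ₜ[k] ((1 : Uk) ⊗ₜ[k] iotaU k d s)))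
        - ((((1 : Uk) ⊗ₜ[k] rU k d r) + ((1 : Uk) ⊗ₜ[k] (iotaU k d s ⊗ₜ[k] (1 : Uk))) - ((1 : Uk) ⊗ₜ[k] ((1 : Uk) ⊗ₜ[k] iotaU k d s))) * ((emb12 k d (rU k d r)) + (emb13 k d (rU k d r)) + (iotaU k d s ⊗ₜ[k] ((1 : Uk) ⊗ₜ[k] (1 : Uk))) - ((1 : Uk) ⊗ₜ[k] (iotaU k d s ⊗ₜ[k] (1 : Uk))) - ((1 : Uk) ⊗ₜ[k] ((1 : Uk) ⊗ₜ[k] iotaU k d s)))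
            - ((emb13 k d (rU k d r)) + (iotaU k d s ⊗ₜ[k] ((1 : Uk) ⊗ₜ[k] (1 : Uk))) - ((1 : Uk) ⊗ₜ[k] ((1 : Uk) ⊗ₜ[k] iotaU k d s))) * (-(emb12 k d (rU k d r)) + ((1 : Uk) ⊗ₜ[k] rU k d r) + ((1 : Uk) ⊗ₜ[k] (iotaU k d s ⊗ₜ[k] (1 : Uk))) - (iotaU k d s ⊗ₜ[k] ((1 : Uk) ⊗ₜ[k] (1 : Uk))) - ((1 : Uk) ⊗ₜ[k] ((1 : Uk) ⊗ₜ[k] iotaU k d s)))) = 0 := by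
      rw [hmain]
      simp only [sub_zero, add_zero, zero_add]
    exact sub_eq_zero.mp hz

end
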